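/- For γ > -1 and c ∈ ℝ, if r̃(r) = e^c r^{γ+1}/(γ+1) + O(r^{3γ+3}) as r → 0⁺, then the inverse relation r(r̃) satisfies r = (γ+1)^{1/(γ+1)} e^{-c/(γ+1)} r̃^{1/(γ+1)} + O(r̃^{2 + 1/(γ+1)}) as r̃ → 0⁺. In particular, r(r̃)/( (γ+1)^{1/(γ+1)} e^{-c/(γ+1)} r̃^{1/(γ+1)} ) → 1 as r̃ → 0⁺. -/

import Mathlib

open Filter Topology Asymptotics

/-- A Lipschitz-type bound for `x ^ p` near `1`. -/
lemma aux_rpow_lip (p : ℝ) (hp : 0 < p) :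
    ∃ M, 0 ≤ M ∧ ∀ x ∈ Set.Icc (1/2 : ℝ) (3/2), |x ^ p - 1| ≤ M * |x - 1| := by
  refine ⟨p * Real.exp (|p - 1| * Real.log 2), by positivity, ?_⟩
  intro x hx
  have h1 : (1:ℝ) ∈ Set.Icc (1/2 : ℝ) (3/2) := by norm_num
  have key := Convex.norm_image_sub_le_of_norm_hasDerivWithin_le
      (f := fun y : ℝ => y ^ p) (f' := fun y : ℝ => p * y ^ (p - 1))
      (s := Set.Icc (1/2 : ℝ) (3/2)) (C := p * Real.exp (|p - 1| * Real.log 2))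
      (fun y hy => (Real.hasDerivAt_rpow_const
        (Or.inl (by have := hy.1; norm_num at this ⊢; linarith))).hasDerivWithinAt)
      ?_ (convex_Icc _ _) h1 hx
  · simpa [Real.one_rpow, Real.norm_eq_abs] using key
  · intro y hy
    have hy0 : (0:ℝ) < y := by have := hy.1; linarith
    have h1 : y ^ (p - 1) = Real.exp (Real.log y * (p - 1)) := by
      rw [Real.rpow_def_of_pos hy0]
    have hlog : |Real.log y| ≤ Real.log 2 := by
      rw [abs_le]
      constructor
      · have := Real.log_le_log (by norm_num : (0:ℝ) < 1/2) hy.1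
        have h2 : Real.log (1/2 : ℝ) = -Real.log 2 := by
          rw [show (1/2 : ℝ) = (2:ℝ)⁻¹ by norm_num, Real.log_inv]
        linarith
      · have := Real.log_le_log hy0 (le_trans hy.2 (by norm_num : (3/2:ℝ) ≤ 2))
        linarith
    have h2 : Real.log y * (p - 1) ≤ |p - 1| * Real.log 2 := by
      calc Real.log y * (p - 1) ≤ |Real.log y * (p - 1)| := le_abs_self _
        _ = |Real.log y| * |p - 1| := abs_mul _ _
        _ ≤ Real.log 2 * |p - 1| := by
            apply mul_le_mul_of_nonneg_right hlog (abs_nonneg _)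
        _ = |p - 1| * Real.log 2 := mul_comm _ _
    have h3 : y ^ (p - 1) ≤ Real.exp (|p - 1| * Real.log 2) := by
      rw [h1]; exact Real.exp_le_exp.2 h2
    have h4 : 0 ≤ y ^ (p - 1) := (Real.rpow_pos_of_pos hy0 _).le
    rw [Real.norm_eq_abs, abs_mul, abs_of_pos hp, abs_of_nonneg h4]
    exact mul_le_mul_of_nonneg_left h3 hp.le

theorem inverse_asymptotics (γ c ε : ℝ) (hγ : γ > -1) (hε : 0 < ε)
    (rt rinv : ℝ → ℝ)
    (hmono : StrictMonoOn rt (Set.Ioo 0 ε))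
    (hcont : ContinuousOn rt (Set.Ioo 0 ε))
    (hpos : ∀ s ∈ Set.Ioo 0 ε, 0 < rt s)
    (hinv : ∀ s ∈ Set.Ioo 0 ε, rinv (rt s) = s)
    (hbig : (fun s => rt s - Real.exp c * s ^ (γ + 1) / (γ + 1))
      =O[𝓝[>] (0:ℝ)] fun s => s ^ (3 * γ + 3)) :
    ((fun t => rinv t - (γ + 1) ^ (1 / (γ + 1)) * Real.exp (-c / (γ + 1)) * t ^ (1 / (γ + 1)))
        =O[𝓝[>] (0:ℝ)] fun t => t ^ (2 + 1 / (γ + 1))) ∧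
      Tendsto
        (fun t => rinv t / ((γ + 1) ^ (1 / (γ + 1)) * Real.exp (-c / (γ + 1)) * t ^ (1 / (γ + 1))))
        (𝓝[>] (0:ℝ)) (𝓝 1) := by
  have hγ1 : (0:ℝ) < γ + 1 := by linarith
  set p : ℝ := 1 / (γ + 1) with hp_def
  have hp : 0 < p := by positivity
  set B : ℝ := Real.exp c / (γ + 1) with hB_def
  have hB0 : 0 < B := by positivity
  set C : ℝ := (γ + 1) ^ p * Real.exp (-c / (γ + 1)) with hC_def
  have hC0 : 0 < C := by positivity
  -- the key identity
  have hid : ∀ s : ℝ, 0 < s → C * (B * s ^ (γ + 1)) ^ p = s := by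
    intro s hs
    have h1 : (B * s ^ (γ + 1)) ^ p = B ^ p * (s ^ (γ + 1)) ^ p :=
      Real.mul_rpow hB0.le (Real.rpow_pos_of_pos hs _).le
    have h2 : (s ^ (γ + 1)) ^ p = s := by
      rw [← Real.rpow_mul hs.le]
      rw [show (γ + 1) * p = 1 by rw [hp_def]; field_simp]
      exact Real.rpow_one s
    have h3 : B ^ p = Real.exp (c * p) / (γ + 1) ^ p := by
      rw [hB_def, Real.div_rpow (Real.exp_pos c).le hγ1.le, Real.exp_mul]
    have h4 : C * B ^ p = 1 := by
      rw [hC_def, h3, show -c / (γ + 1) = -(c * p) by rw [hp_def]; field_simp]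
      rw [Real.exp_neg]
      have hne1 : (γ + 1 : ℝ) ^ p ≠ 0 := (Real.rpow_pos_of_pos hγ1 p).ne'
      have hne2 : Real.exp (c * p) ≠ 0 := (Real.exp_pos _).ne'
      field_simp
    rw [h1, h2, ← mul_assoc, h4, one_mul]
  -- rewrite hbig
  have hbig' : (fun s => rt s - B * s ^ (γ + 1)) =O[𝓝[>] (0:ℝ)] fun s => s ^ (3 * γ + 3) := by
    simpa only [hB_def, div_mul_eq_mul_div] using hbig
  have hmem : Set.Ioo (0:ℝ) ε ∈ 𝓝[>] (0:ℝ) := Ioo_mem_nhdsGT_of_mem ⟨le_refl 0, hε⟩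
  have h_rpow_tendsto : ∀ q : ℝ, 0 < q →
      Tendsto (fun s : ℝ => s ^ q) (𝓝[>] (0:ℝ)) (𝓝 0) := by
    intro q hq
    have h := (Real.continuousAt_rpow_const 0 q (Or.inr hq.le)).tendsto
    rw [Real.zero_rpow hq.ne'] at h
    exact h.mono_left nhdsWithin_le_nhds
  -- rt tends to 0
  have hrt0 : Tendsto rt (𝓝[>] (0:ℝ)) (𝓝 0) := by
    have h1 : Tendsto (fun s => rt s - B * s ^ (γ + 1)) (𝓝[>] (0:ℝ)) (𝓝 0) :=
      hbig'.trans_tendsto (h_rpow_tendsto _ (by linarith))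
    have h2 : Tendsto (fun s : ℝ => B * s ^ (γ + 1)) (𝓝[>] (0:ℝ)) (𝓝 0) := by
      have := (h_rpow_tendsto (γ + 1) hγ1).const_mul B
      simpa using this
    have := h1.add h2
    simpa using this
  -- surjectivity / inverse control
  have key : ∀ δ, δ ∈ Set.Ioo (0:ℝ) ε → ∀ t ∈ Set.Ioo 0 (rt δ),
      rinv t ∈ Set.Ioo 0 δ ∧ rt (rinv t) = t := by
    intro δ hδ t ht
    have hev1 : ∀ᶠ s in 𝓝[>] (0:ℝ), rt s < t := hrt0.eventually_lt_const ht.1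
    have hev2 : ∀ᶠ s in 𝓝[>] (0:ℝ), s ∈ Set.Ioo 0 δ :=
      Ioo_mem_nhdsGT_of_mem ⟨le_refl 0, hδ.1⟩
    obtain ⟨δ', hδ'lt, hδ'mem⟩ := (hev1.and hev2).exists
    have hsub : Set.Icc δ' δ ⊆ Set.Ioo 0 ε := fun x hx =>
      ⟨lt_of_lt_of_le hδ'mem.1 hx.1, lt_of_le_of_lt hx.2 hδ.2⟩
    have hIVT := intermediate_value_Icc hδ'mem.2.le (hcont.mono hsub)
    obtain ⟨s, hsmem, hst⟩ := hIVT ⟨hδ'lt.le, ht.2.le⟩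
    have hsIoo : s ∈ Set.Ioo 0 ε := hsub hsmem
    have hs0 : 0 < s := hsIoo.1
    have hslt : s < δ := by
      rcases lt_or_eq_of_le hsmem.2 with h | h
      · exact h
      · exfalso; rw [h] at hst; exact absurd hst (ne_of_gt ht.2)
    have hrinv : rinv t = s := by rw [← hst, hinv s hsIoo]
    exact ⟨⟨hrinv ▸ hs0, hrinv ▸ hslt⟩, by rw [hrinv, hst]⟩
  -- rinv tends to 0 within Ioi 0
  have hrinv_tendsto : Tendsto rinv (𝓝[>] (0:ℝ)) (𝓝[>] (0:ℝ)) := by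
    rw [(nhdsGT_basis (0:ℝ)).tendsto_right_iff]
    intro δ hδ0
    have hδ' : min δ (ε/2) ∈ Set.Ioo (0:ℝ) ε :=
      ⟨lt_min hδ0 (by linarith), lt_of_le_of_lt (min_le_right _ _) (by linarith)⟩
    have hrtδ' : 0 < rt (min δ (ε/2)) := hpos _ hδ'
    filter_upwards [Ioo_mem_nhdsGT_of_mem
      (⟨le_refl 0, hrtδ'⟩ : (0:ℝ) ∈ Set.Ico 0 (rt (min δ (ε/2))))] with t ht
    have h := (key _ hδ' t ht).1
    exact ⟨h.1, lt_of_lt_of_le h.2 (min_le_left _ _)⟩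
  have hev_inv : ∀ᶠ t in 𝓝[>] (0:ℝ), rt (rinv t) = t ∧ rinv t ∈ Set.Ioo 0 ε := by
    have hhalf : (ε/2) ∈ Set.Ioo (0:ℝ) ε := ⟨by linarith, by linarith⟩
    filter_upwards [Ioo_mem_nhdsGT_of_mem
      (⟨le_refl 0, hpos _ hhalf⟩ : (0:ℝ) ∈ Set.Ico 0 (rt (ε/2)))] with t ht
    obtain ⟨h1, h2⟩ := key _ hhalf t ht
    exact ⟨h2, ⟨h1.1, by linarith [h1.2]⟩⟩
  -- the main estimate on the s side
  obtain ⟨K, hK0, hKw⟩ := hbig'.exists_nonneg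
  obtain ⟨M, hM0, hM⟩ := aux_rpow_lip p hp
  set K₁ : ℝ := C * M * K * B ^ (p - 1) * (2 / B) ^ (2 + p) with hK₁_def
  have hK₁0 : 0 ≤ K₁ := by positivity
  have hsfinal : ∀ᶠ s in 𝓝[>] (0:ℝ),
      |s - C * (rt s) ^ p| ≤ K₁ * (rt s) ^ (2 + p) := by
    have hev3 : ∀ᶠ s in 𝓝[>] (0:ℝ), K * s ^ (2 * γ + 2) ≤ B / 2 := by
      have := (h_rpow_tendsto (2 * γ + 2) (by linarith)).const_mul K
      rw [mul_zero] at this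
      exact this.eventually_le_const (by positivity)
    filter_upwards [hmem, hKw.bound, hev3, self_mem_nhdsWithin] with s hs1 hs2 hs3 hs0'
    have hs0 : (0:ℝ) < s := hs0'
    set u : ℝ := s ^ (γ + 1) with hu_def
    have hu0 : 0 < u := Real.rpow_pos_of_pos hs0 _
    set t : ℝ := rt s with ht_def
    have ht0 : 0 < t := hpos s hs1
    -- |t - B u| ≤ K * u^3
    have hu3 : s ^ (3 * γ + 3) = u ^ (3:ℝ) := by
      rw [hu_def, ← Real.rpow_mul hs0.le]; ring_nf
    have hu2 : s ^ (2 * γ + 2) = u ^ (2:ℝ) := by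
      rw [hu_def, ← Real.rpow_mul hs0.le]; ring_nf
    have hE : |t - B * u| ≤ K * u ^ (3:ℝ) := by
      have := hs2
      rw [Real.norm_eq_abs, Real.norm_eq_abs,
        abs_of_pos (Real.rpow_pos_of_pos hs0 (3 * γ + 3)), hu3] at this
      exact this
    have hu3split : u ^ (3:ℝ) = u ^ (2:ℝ) * u := by
      rw [show (3:ℝ) = 2 + 1 by norm_num, Real.rpow_add hu0, Real.rpow_one]
    have hE2 : |t - B * u| ≤ B / 2 * u := by
      calc |t - B * u| ≤ K * u ^ (3:ℝ) := hE
        _ = (K * u ^ (2:ℝ)) * u := by rw [hu3split]; ring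
        _ ≤ B / 2 * u := by
            apply mul_le_mul_of_nonneg_right _ hu0.le
            rw [← hu2]; exact hs3
    have hBu0 : 0 < B * u := by positivity
    have htlo : B * u / 2 ≤ t := by
      have := (abs_le.1 hE2).1; linarith
    have hthi : t ≤ 3 * (B * u) / 2 := by
      have := (abs_le.1 hE2).2; linarith
    set x : ℝ := t / (B * u) with hx_def
    have hxmem : x ∈ Set.Icc (1/2 : ℝ) (3/2) := by
      constructor
      · rw [hx_def, le_div_iff₀ hBu0]; linarith
      · rw [hx_def, div_le_iff₀ hBu0]; linarith
    have htx : t = (B * u) * x := by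
      rw [hx_def, mul_div_cancel₀ _ hBu0.ne']
    have htp : t ^ p = (B * u) ^ p * x ^ p := by
      rw [htx, Real.mul_rpow hBu0.le (by rw [hx_def]; positivity)]
    have hids : C * (B * u) ^ p = s := hid s hs0
    -- main bound
    have hxb := hM x hxmem
    have hx1 : |x - 1| = |t - B * u| / (B * u) := by
      rw [hx_def, show t / (B * u) - 1 = (t - B * u) / (B * u) by field_simp,
        abs_div, abs_of_pos hBu0]
    have hmain : |s - C * t ^ p| ≤ C * (B * u) ^ p * M * (K * u ^ (3:ℝ) / (B * u)) := by
      have h1 : s - C * t ^ p = C * (B * u) ^ p * (1 - x ^ p) := by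
        rw [htp, ← hids]; ring
      rw [h1, abs_mul, abs_of_pos (by positivity : (0:ℝ) < C * (B * u) ^ p)]
      rw [abs_sub_comm]
      calc C * (B * u) ^ p * |x ^ p - 1| ≤ C * (B * u) ^ p * (M * |x - 1|) :=
            mul_le_mul_of_nonneg_left hxb (by positivity)
        _ = C * (B * u) ^ p * M * |x - 1| := by ring
        _ ≤ C * (B * u) ^ p * M * (K * u ^ (3:ℝ) / (B * u)) := by
            apply mul_le_mul_of_nonneg_left _ (by positivity)
            rw [hx1]
            gcongr
    -- rewrite the RHS
    have hBp : (B * u) ^ p = B ^ p * u ^ p := Real.mul_rpow hB0.le hu0.le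
    have hBp1 : B ^ (p - 1) = B ^ p / B := Real.rpow_sub_one hB0.ne' p
    have hup2 : u ^ (2 + p) = u ^ (2:ℝ) * u ^ p := Real.rpow_add hu0 2 p
    have hu2e : u ^ (2:ℝ) = u * u := by
      rw [show (2:ℝ) = 1 + 1 by norm_num, Real.rpow_add hu0, Real.rpow_one]
    have heq1 : C * (B * u) ^ p * M * (K * u ^ (3:ℝ) / (B * u))
        = (C * M * K * B ^ (p - 1)) * u ^ (2 + p) := by
      rw [hBp, hBp1, hup2, hu3split, hu2e]
      field_simp
    have heq2 : u ^ (2 + p) = (2 / B) ^ (2 + p) * (B * u / 2) ^ (2 + p) := by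
      rw [← Real.mul_rpow (by positivity) (by positivity)]
      congr 1
      field_simp
    have hle3 : (B * u / 2) ^ (2 + p) ≤ t ^ (2 + p) :=
      Real.rpow_le_rpow (by positivity) htlo (by positivity)
    calc |s - C * t ^ p| ≤ C * (B * u) ^ p * M * (K * u ^ (3:ℝ) / (B * u)) := hmain
      _ = (C * M * K * B ^ (p - 1)) * u ^ (2 + p) := heq1
      _ = (C * M * K * B ^ (p - 1)) * ((2 / B) ^ (2 + p) * (B * u / 2) ^ (2 + p)) := by
          rw [← heq2]
      _ ≤ (C * M * K * B ^ (p - 1)) * ((2 / B) ^ (2 + p) * t ^ (2 + p)) := by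
          apply mul_le_mul_of_nonneg_left _ (by positivity)
          exact mul_le_mul_of_nonneg_left hle3 (by positivity)
      _ = K₁ * t ^ (2 + p) := by rw [hK₁_def]; ring
  -- transfer to the t side
  have htfinal : ∀ᶠ t in 𝓝[>] (0:ℝ),
      |rinv t - C * t ^ p| ≤ K₁ * t ^ (2 + p) := by
    filter_upwards [hev_inv, hrinv_tendsto.eventually hsfinal] with t hinv2 hb
    rw [hinv2.1] at hb
    exact hb
  constructor
  · rw [isBigO_iff]
    refine ⟨K₁, ?_⟩
    filter_upwards [htfinal, self_mem_nhdsWithin] with t hbt ht0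
    have ht0' : (0:ℝ) < t := ht0
    rw [Real.norm_eq_abs, Real.norm_eq_abs,
      abs_of_pos (Real.rpow_pos_of_pos ht0' (2 + p))]
    exact hbt
  · have herr : Tendsto (fun t => (rinv t - C * t ^ p) / (C * t ^ p)) (𝓝[>] (0:ℝ)) (𝓝 0) := by
      apply squeeze_zero_norm' (a := fun t : ℝ => (K₁ / C) * t ^ (2:ℝ))
      · filter_upwards [htfinal, self_mem_nhdsWithin] with t hbt ht0
        have ht0' : (0:ℝ) < t := ht0
        have hden : 0 < C * t ^ p := by positivity
        rw [Real.norm_eq_abs, abs_div, abs_of_pos hden, div_le_iff₀ hden]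
        calc |rinv t - C * t ^ p| ≤ K₁ * t ^ (2 + p) := hbt
          _ = K₁ / C * t ^ (2:ℝ) * (C * t ^ p) := by
              rw [Real.rpow_add ht0' 2 p]; field_simp
      · have := (h_rpow_tendsto 2 (by norm_num)).const_mul (K₁ / C)
        simpa using this
    have h1 : Tendsto (fun t => 1 + (rinv t - C * t ^ p) / (C * t ^ p))
        (𝓝[>] (0:ℝ)) (𝓝 1) := by
      have := (tendsto_const_nhds (x := (1:ℝ)) (f := 𝓝[>] (0:ℝ))).add herr
      simpa using this
    apply h1.congr'
    filter_upwards [self_mem_nhdsWithin] with t ht0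
    have ht0' : (0:ℝ) < t := ht0
    have hden : C * t ^ p ≠ 0 := by positivity
    field_simp
    ring
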